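/- Let V_f (resp. V_∞) be the set of vertices emitting finitely (resp. infinitely) many edges, Y_f = {α ∈ Y : r(α) ∈ V_f} and Y_∞ = {α ∈ Y : r(α) ∈ V_∞}. Then: (1) for every y ∈ Y_∞, the sets D_y \ (D_{ye_1} ∪ ⋯ ∪ D_{ye_n}), where {e_1, …, e_n} ranges over finite sets of edges with s(e_i) = r(y), form a neighborhood basis at y in Y ∪ Z; and (2) for α ∈ Y, the singleton {α} is open in Y ∪ Z if and only if α ∈ Y_f. -/

import Mathlib

namespace GraphCstar

/-- A directed graph: vertices, edges, source and range maps. -/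
structure Graph where
  V : Type
  Ed : Type
  src : Ed → V
  rng : Ed → V

variable (G : Graph)

/-- Validity of a list of edges as a path starting at vertex `v`. -/
def Valid : G.V → List G.Ed → Prop
  | _, [] => True
  | v, e :: l => G.src e = v ∧ Valid (G.rng e) l

/-- Terminal vertex of a list of edges starting at `v`. -/
def rngTo : G.V → List G.Ed → G.V
  | v, [] => v
  | _, e :: l => rngTo (G.rng e) l

theorem valid_append (l₁ l₂ : List G.Ed) (v : G.V) :
    Valid G v (l₁ ++ l₂) ↔ Valid G v l₁ ∧ Valid G (rngTo G v l₁) l₂ := by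
  induction l₁ generalizing v with
  | nil => simp [Valid, rngTo]
  | cons e l ih => simp [Valid, rngTo, ih, and_assoc]

theorem rngTo_append (l₁ l₂ : List G.Ed) (v : G.V) :
    rngTo G v (l₁ ++ l₂) = rngTo G (rngTo G v l₁) l₂ := by
  induction l₁ generalizing v with
  | nil => rfl
  | cons e l ih => simp [rngTo, ih]

theorem valid_drop {v : G.V} {l : List G.Ed} (n : ℕ) (h : Valid G v l) :
    Valid G (rngTo G v (l.take n)) (l.drop n) := by
  have h' : Valid G v (l.take n ++ l.drop n) := by
    rw [List.take_append_drop]; exact h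
  exact ((valid_append G _ _ _).mp h').2

/-- A finite path in the graph `G`; vertices are the paths of length `0`. -/
structure FinPath where
  start : G.V
  edges : List G.Ed
  valid : Valid G start edges

namespace FinPath

variable {G}

/-- The terminal vertex (range) of a finite path. -/
def rngF (α : FinPath G) : G.V := rngTo G α.start α.edges

/-- The length of a finite path. -/
def len (α : FinPath G) : ℕ := α.edges.length

/-- The finite path of length `0` at the vertex `v`. -/
def vp (v : G.V) : FinPath G := ⟨v, [], trivial⟩

/-- The finite path consisting of the single edge `e`. -/
def ep (e : G.Ed) : FinPath G := ⟨G.src e, [e], ⟨rfl, trivial⟩⟩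

/-- Concatenation of finite paths. -/
def concat (α β : FinPath G) (h : β.start = α.rngF) : FinPath G :=
  ⟨α.start, α.edges ++ β.edges,
    (valid_append G _ _ _).mpr
      ⟨α.valid, by
        show Valid G α.rngF β.edges
        rw [← h]; exact β.valid⟩⟩

theorem rngF_concat (α β : FinPath G) (h : β.start = α.rngF) :
    (α.concat β h).rngF = β.rngF := by
  show rngTo G α.start (α.edges ++ β.edges) = _
  rw [rngTo_append]
  show rngTo G α.rngF β.edges = _
  rw [← h]; rfl

end FinPath

/-- `α` is an initial segment of `β`. -/
def IsPref (α β : FinPath G) : Prop := α.start = β.start ∧ α.edges <+: β.edges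

/-- The "remainder" path: if `α` is an initial segment of `β`, the path `μ` with
`β = αμ` (for other inputs the value is junk). -/
def diff (α β : FinPath G) : FinPath G :=
  ⟨rngTo G β.start (β.edges.take α.edges.length),
    β.edges.drop α.edges.length, valid_drop G _ β.valid⟩

open Classical in
/-- Totalized concatenation of finite paths (junk value when endpoints do not match). -/
noncomputable def catP (α β : FinPath G) : FinPath G :=
  if h : β.start = α.rngF then α.concat β h else α

open Classical in
/-- The product on `T = {(α,β) ∈ Y × Y : r(α) = r(β)} ∪ {z}`, with `z` encoded as `none`. -/
noncomputable def mulT :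
    Option (FinPath G × FinPath G) → Option (FinPath G × FinPath G) →
      Option (FinPath G × FinPath G)
  | none, _ => none
  | _, none => none
  | some (α₁, β₁), some (α₂, β₂) =>
    if IsPref G β₁ α₂ then some (catP G α₁ (diff G β₁ α₂), β₂)
    else if IsPref G α₂ β₁ then some (α₁, catP G β₂ (diff G α₂ β₁))
    else none

/-- The involution on `T`. -/
def starT :
    Option (FinPath G × FinPath G) → Option (FinPath G × FinPath G)
  | none => none
  | some (α, β) => some (β, α)

/-- The subset of `Option (FinPath G × FinPath G)` corresponding to
`T = {(α,β) : r(α) = r(β)} ∪ {z}`. -/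
def TsetT : Set (Option (FinPath G × FinPath G)) :=
  {t | ∀ α β : FinPath G, t = some (α, β) → α.rngF = β.rngF}

/-- An infinite path in the graph `G`. -/
structure InfPath where
  seq : ℕ → G.Ed
  valid : ∀ i, G.src (seq (i + 1)) = G.rng (seq i)

/-- The initial vertex of an infinite path. -/
def InfPath.start {G : Graph} (z : InfPath G) : G.V := G.src (z.seq 0)

/-- Prepending an edge to an infinite path. -/
def consInf (e : G.Ed) (z : InfPath G) (h : z.start = G.rng e) : InfPath G where
  seq := fun n =>
    match n with
    | 0 => e
    | m + 1 => z.seq m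
  valid := fun i =>
    match i with
    | 0 => h
    | m + 1 => z.valid m

/-- Prepending a finite edge list to an infinite path (with the starting vertex recorded). -/
def appendInfAux :
    (l : List G.Ed) → (v : G.V) → Valid G v l → (z : InfPath G) →
      z.start = rngTo G v l → {w : InfPath G // w.start = v}
  | [], _, _, z, h => ⟨z, h⟩
  | e :: l, v, hv, z, h =>
    let w := appendInfAux l (G.rng e) hv.2 z h
    ⟨consInf G e w.1 w.2, hv.1⟩

/-- Concatenation of a finite path with an infinite path. -/
def FinPath.concatInf {G : Graph} (α : FinPath G) (z : InfPath G)
    (h : z.start = α.rngF) : InfPath G :=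
  (appendInfAux G α.edges α.start α.valid z h).1

/-- The path space `Y ∪ Z` of all finite and infinite paths. -/
def PathSp := FinPath G ⊕ InfPath G

/-- The initial vertex of a (finite or infinite) path. -/
def startOf : PathSp G → G.V
  | .inl α => α.start
  | .inr z => z.start

/-- The length of a path, in `ℕ∞`. -/
def lenOf : PathSp G → ℕ∞
  | .inl α => (α.edges.length : ℕ∞)
  | .inr _ => ⊤

/-- The `i`-th edge (0-indexed) of a path, if it exists. -/
def nthEdge : PathSp G → ℕ → Option G.Ed
  | .inl α, i => α.edges[i]?
  | .inr z, i => some (z.seq i)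

/-- `x = αγ` for some (finite or infinite, possibly length `0`) path `γ`;
that is, `α` is an initial segment of `x`, i.e. `x ∈ D_α`. -/
def Ext (α : FinPath G) (x : PathSp G) : Prop :=
  (∃ (β : FinPath G) (h : β.start = α.rngF), x = .inl (α.concat β h)) ∨
  (∃ (w : InfPath G) (h : w.start = α.rngF), x = .inr (α.concatInf w h))

/-- The basic set `D_α ⊆ Y ∪ Z`. -/
def Dset (α : FinPath G) : Set (PathSp G) := {x | Ext G α x}

/-- The topology on the path space, generated by the sets `D_α` and their complements. -/
def pathTop : TopologicalSpace (PathSp G) :=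
  .generateFrom (Set.range (Dset G) ∪ Set.range fun α => (Dset G α)ᶜ)

/-- The vertex `v` emits infinitely many edges. -/
def Vinf (v : G.V) : Prop := {e | G.src e = v}.Infinite

/-- Membership in `X = Y_∞ ∪ Z`. -/
def memX : PathSp G → Prop
  | .inl α => Vinf G α.rngF
  | .inr _ => True

/-- The set `X = Y_∞ ∪ Z`. -/
def Xset : Set (PathSp G) := {x | memX G x}

/-- Tail equivalence of paths: `x = αγ` and `y = βγ` for finite paths `α, β`
and a common (finite or infinite) path `γ`. -/
def TailEq (x y : PathSp G) : Prop :=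
  (∃ (α β γ : FinPath G) (h₁ : γ.start = α.rngF) (h₂ : γ.start = β.rngF),
      x = .inl (α.concat γ h₁) ∧ y = .inl (β.concat γ h₂)) ∨
  (∃ (α β : FinPath G) (w : InfPath G) (h₁ : w.start = α.rngF)
      (h₂ : w.start = β.rngF),
      x = .inr (α.concatInf w h₁) ∧ y = .inr (β.concatInf w h₂))

/-- A subset of the path space is invariant (a union of tail-equivalence classes). -/
def InvariantS (F : Set (PathSp G)) : Prop :=
  ∀ x ∈ F, ∀ y, TailEq G x y → y ∈ F

/-- Membership `(x, k, y) ∈ G` for the path groupoid: `x = αγ`, `y = βγ` and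
`k = l(α) - l(β)`. -/
def InG (x : PathSp G) (k : ℤ) (y : PathSp G) : Prop :=
  (∃ (α β γ : FinPath G) (h₁ : γ.start = α.rngF) (h₂ : γ.start = β.rngF),
      x = .inl (α.concat γ h₁) ∧ y = .inl (β.concat γ h₂) ∧
        k = (α.len : ℤ) - (β.len : ℤ)) ∨
  (∃ (α β : FinPath G) (w : InfPath G) (h₁ : w.start = α.rngF)
      (h₂ : w.start = β.rngF),
      x = .inr (α.concatInf w h₁) ∧ y = .inr (β.concatInf w h₂) ∧
        k = (α.len : ℤ) - (β.len : ℤ))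

/-- There is a finite path from `u` to `w`. -/
def Reach (u w : G.V) : Prop := ∃ β : FinPath G, β.start = u ∧ β.rngF = w

/-- A loop based at the vertex `v`. -/
def LoopAt (v : G.V) (α : FinPath G) : Prop :=
  α.edges ≠ [] ∧ α.start = v ∧ α.rngF = v ∧
    ∀ i e, i + 1 < α.edges.length → α.edges[i]? = some e → G.rng e ≠ v

/-- Condition (K): no vertex has exactly one loop based at it. -/
def CondK : Prop := ¬ ∃ v : G.V, ∃! α : FinPath G, LoopAt G v α

/-- A point of the path space has trivial isotropy if whenever `x = αγ = βγ`
then `l(α) = l(β)`. -/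
def TrivIso (x : PathSp G) : Prop :=
  ∀ α β : FinPath G,
    ((∃ (γ : FinPath G) (h₁ : γ.start = α.rngF) (h₂ : γ.start = β.rngF),
        x = .inl (α.concat γ h₁) ∧ x = .inl (β.concat γ h₂)) ∨
     (∃ (w : InfPath G) (h₁ : w.start = α.rngF) (h₂ : w.start = β.rngF),
        x = .inr (α.concatInf w h₁) ∧ x = .inr (β.concatInf w h₂))) →
    α.len = β.len


/-! ### Auxiliary lemmas -/

theorem FinPath.ext' {G : Graph} {α β : FinPath G} (h1 : α.start = β.start)
    (h2 : α.edges = β.edges) : α = β := by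
  cases α; cases β; simp_all

theorem InfPath.ext' {G : Graph} {z w : InfPath G} (h : ∀ i, z.seq i = w.seq i) : z = w := by
  have h' : z.seq = w.seq := funext h
  cases z; cases w; simp_all

theorem src_getElem {v : G.V} {l : List G.Ed} (hv : Valid G v l) {i : ℕ} {e : G.Ed}
    (he : l[i]? = some e) : G.src e = rngTo G v (l.take i) := by
  have hi : i < l.length := by
    by_contra h
    rw [List.getElem?_eq_none (Nat.le_of_not_lt h)] at he
    exact nomatch he
  have hd := valid_drop G i hv
  rw [List.drop_eq_getElem_cons hi] at hd
  have : l[i] = e := by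
    have := List.getElem?_eq_getElem hi
    rw [he] at this; exact (Option.some.injEq _ _).mp this.symm
  rw [← this]
  exact hd.1

theorem appendInfAux_seq (l : List G.Ed) (v : G.V) (hv : Valid G v l) (z : InfPath G)
    (h : z.start = rngTo G v l) (n : ℕ) :
    (appendInfAux G l v hv z h).1.seq n = (l[n]?).getD (z.seq (n - l.length)) := by
  induction l generalizing v n with
  | nil => simp [appendInfAux]
  | cons e l ih =>
    cases n with
    | zero => simp [appendInfAux, consInf]
    | succ m =>
      show (appendInfAux G l (G.rng e) hv.2 z h).1.seq m = _
      refine (ih (G.rng e) hv.2 h m).trans ?_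
      simp

theorem concatInf_start {G : Graph} (α : FinPath G) (w : InfPath G) (h : w.start = α.rngF) :
    (α.concatInf w h).start = α.start :=
  (appendInfAux G α.edges α.start α.valid w h).2

theorem concatInf_seq {G : Graph} (α : FinPath G) (w : InfPath G) (h : w.start = α.rngF)
    (n : ℕ) :
    (α.concatInf w h).seq n = (α.edges[n]?).getD (w.seq (n - α.edges.length)) :=
  appendInfAux_seq G α.edges α.start α.valid w h n

/-- `α` is an initial segment of the (finite or infinite) path `x`,
expressed via coordinates. -/
def PrefOf (α : FinPath G) (x : PathSp G) : Prop :=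
  startOf G x = α.start ∧ ∀ i, i < α.edges.length → nthEdge G x i = α.edges[i]?

theorem src_seq_eq_rngTo (z : InfPath G) (v : G.V) (l : List G.Ed)
    (h0 : z.start = v) (h : ∀ i, i < l.length → some (z.seq i) = l[i]?) :
    G.src (z.seq l.length) = rngTo G v l := by
  rcases List.eq_nil_or_concat l with rfl | ⟨L, e, rfl⟩
  · exact h0
  · simp only [List.concat_eq_append] at h ⊢
    rw [rngTo_append]
    have hL : some (z.seq L.length) = (L ++ [e])[L.length]? :=
      h L.length (by simp)
    rw [List.getElem?_concat_length] at hL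
    have hv := z.valid L.length
    have : z.seq L.length = e := (Option.some.injEq _ _).mp hL
    rw [this] at hv
    have hlen : (L ++ [e]).length = L.length + 1 := by simp
    rw [hlen, hv]
    rfl

theorem ext_iff_pref (α : FinPath G) (x : PathSp G) : Ext G α x ↔ PrefOf G α x := by
  constructor
  · rintro (⟨β, h, rfl⟩ | ⟨w, h, rfl⟩)
    · refine ⟨rfl, fun i hi => ?_⟩
      show (α.edges ++ β.edges)[i]? = α.edges[i]?
      exact List.getElem?_append_left hi
    · refine ⟨concatInf_start α w h, fun i hi => ?_⟩
      show some ((α.concatInf w h).seq i) = α.edges[i]?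
      rw [concatInf_seq, List.getElem?_eq_getElem hi]
      rfl
  · rintro ⟨hs, hn⟩
    cases x with
    | inl γ =>
      have hle : α.edges.length ≤ γ.edges.length := by
        by_contra hc
        have h1 := hn γ.edges.length (Nat.lt_of_not_le hc)
        rw [show nthEdge G (Sum.inl γ) γ.edges.length = none from
          List.getElem?_eq_none le_rfl] at h1
        rw [List.getElem?_eq_getElem (Nat.lt_of_not_le hc)] at h1
        exact nomatch h1
      have htake : γ.edges.take α.edges.length = α.edges := by
        apply List.ext_getElem?
        intro i
        rw [List.getElem?_take]
        by_cases hi : i < α.edges.length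
        · rw [if_pos hi]; exact hn i hi
        · rw [if_neg hi, List.getElem?_eq_none (Nat.le_of_not_lt hi)]
      refine Or.inl ⟨⟨rngTo G γ.start (γ.edges.take α.edges.length),
        γ.edges.drop α.edges.length, valid_drop G _ γ.valid⟩, ?_, ?_⟩
      · show rngTo G γ.start (γ.edges.take α.edges.length) = α.rngF
        have hs' : γ.start = α.start := hs
        rw [htake, hs']
        rfl
      · congr 1
        refine (FinPath.ext' ?_ ?_).symm
        · exact (show γ.start = α.start from hs).symm
        · show α.edges ++ γ.edges.drop α.edges.length = γ.edges
          have h2 : α.edges ++ γ.edges.drop α.edges.length =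
              γ.edges.take α.edges.length ++ γ.edges.drop α.edges.length := by rw [htake]
          rw [h2, List.take_append_drop]
    | inr z =>
      have hcoord : ∀ i, i < α.edges.length → some (z.seq i) = α.edges[i]? := hn
      set w : InfPath G := ⟨fun i => z.seq (i + α.edges.length), fun i => by
        have hz := z.valid (i + α.edges.length)
        show G.src (z.seq (i + 1 + α.edges.length)) = G.rng (z.seq (i + α.edges.length))
        rw [show i + 1 + α.edges.length = i + α.edges.length + 1 by omega]
        exact hz⟩ with hw
      have hws : w.start = α.rngF := by
        show G.src (z.seq (0 + α.edges.length)) = α.rngF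
        rw [Nat.zero_add]
        exact src_seq_eq_rngTo G z α.start α.edges hs hcoord
      refine Or.inr ⟨w, hws, ?_⟩
      congr 1
      apply InfPath.ext'
      intro i
      rw [concatInf_seq]
      by_cases hi : i < α.edges.length
      · rw [List.getElem?_eq_getElem hi]
        have := hcoord i hi
        rw [List.getElem?_eq_getElem hi] at this
        exact (Option.some.injEq _ _).mp this
      · rw [List.getElem?_eq_none (Nat.le_of_not_lt hi)]
        show z.seq i = z.seq (i - α.edges.length + α.edges.length)
        rw [Nat.sub_add_cancel (Nat.le_of_not_lt hi)]

theorem prefOf_inl_len_le {α β : FinPath G} (h : PrefOf G α (Sum.inl β)) :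
    α.edges.length ≤ β.edges.length := by
  by_contra hc
  have h1 := h.2 β.edges.length (Nat.lt_of_not_le hc)
  rw [show nthEdge G (Sum.inl β) β.edges.length = none from
    List.getElem?_eq_none le_rfl] at h1
  rw [List.getElem?_eq_getElem (Nat.lt_of_not_le hc)] at h1
  exact nomatch h1

theorem pref_of_le {α β : FinPath G} {x : PathSp G} (hα : PrefOf G α x) (hβ : PrefOf G β x)
    (h : α.edges.length ≤ β.edges.length) : IsPref G α β := by
  refine ⟨hα.1.symm.trans hβ.1, List.prefix_iff_eq_take.mpr ?_⟩
  apply List.ext_getElem?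
  intro i
  rw [List.getElem?_take]
  by_cases hi : i < α.edges.length
  · rw [if_pos hi, ← hα.2 i hi, hβ.2 i (lt_of_lt_of_le hi h)]
  · rw [if_neg hi, List.getElem?_eq_none (Nat.le_of_not_lt hi)]

theorem prefOf_of_isPref {α β : FinPath G} {x : PathSp G} (h : IsPref G α β)
    (hx : PrefOf G β x) : PrefOf G α x := by
  obtain ⟨t, ht⟩ := h.2
  refine ⟨hx.1.trans h.1.symm, fun i hi => ?_⟩
  have hlen : α.edges.length ≤ β.edges.length := by
    rw [← ht]; simp
  rw [hx.2 i (lt_of_lt_of_le hi hlen), ← ht, List.getElem?_append_left hi]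

theorem prefOf_self (α : FinPath G) : PrefOf G α (Sum.inl α) :=
  ⟨rfl, fun _ _ => rfl⟩

theorem mem_Dset_self (α : FinPath G) : Sum.inl α ∈ Dset G α :=
  (ext_iff_pref G α _).mpr (prefOf_self G α)

theorem mem_Dset_inl {α β : FinPath G} : Sum.inl β ∈ Dset G α ↔ IsPref G α β := by
  constructor
  · intro h
    have hp := (ext_iff_pref G α _).mp h
    exact pref_of_le G hp (prefOf_self G β) (prefOf_inl_len_le G hp)
  · intro h
    exact (ext_iff_pref G α _).mpr (prefOf_of_isPref G h (prefOf_self G β))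

theorem Dset_mono {α β : FinPath G} (h : IsPref G α β) : Dset G β ⊆ Dset G α :=
  fun _ hx => (ext_iff_pref G α _).mpr (prefOf_of_isPref G h ((ext_iff_pref G β _).mp hx))

theorem isPref_antisymm {α β : FinPath G} (h1 : IsPref G α β) (h2 : IsPref G β α) : α = β :=
  FinPath.ext' h1.1 (h1.2.sublist.antisymm h2.2.sublist)

theorem Dset_inj {α β : FinPath G} (h : Dset G α = Dset G β) : α = β := by
  have h1 : Sum.inl α ∈ Dset G β := h ▸ mem_Dset_self G α
  have h2 : Sum.inl β ∈ Dset G α := h.symm ▸ mem_Dset_self G β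
  exact isPref_antisymm G (mem_Dset_inl G |>.mp h2) (mem_Dset_inl G |>.mp h1)

theorem isOpen_Dset (α : FinPath G) : @IsOpen (PathSp G) (pathTop G) (Dset G α) :=
  TopologicalSpace.GenerateOpen.basic _ (Or.inl ⟨α, rfl⟩)

theorem isOpen_compl_Dset (α : FinPath G) : @IsOpen (PathSp G) (pathTop G) (Dset G α)ᶜ :=
  TopologicalSpace.GenerateOpen.basic _ (Or.inr ⟨α, rfl⟩)

theorem catP_ep_start {y : FinPath G} {e : G.Ed} (h : G.src e = y.rngF) :
    (catP G y (FinPath.ep e)).start = y.start := by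
  rw [catP, dif_pos (show (FinPath.ep e).start = y.rngF from h)]
  rfl

theorem catP_ep_edges {y : FinPath G} {e : G.Ed} (h : G.src e = y.rngF) :
    (catP G y (FinPath.ep e)).edges = y.edges ++ [e] := by
  rw [catP, dif_pos (show (FinPath.ep e).start = y.rngF from h)]
  rfl

theorem not_mem_Dset_catP {y : FinPath G} {e : G.Ed} (h : G.src e = y.rngF) :
    Sum.inl y ∉ Dset G (catP G y (FinPath.ep e)) := by
  intro hc
  have hp := (mem_Dset_inl G).mp hc
  have := hp.2.length_le
  rw [catP_ep_edges G h] at this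
  simp at this

theorem isOpen_basic_nbhd (y : FinPath G) (F : Finset G.Ed) :
    @IsOpen (PathSp G) (pathTop G)
      (Dset G y \ ⋃ e ∈ F, Dset G (catP G y (FinPath.ep e))) := by
  letI := pathTop G
  have : Dset G y \ ⋃ e ∈ F, Dset G (catP G y (FinPath.ep e)) =
      Dset G y ∩ ⋂ e ∈ F, (Dset G (catP G y (FinPath.ep e)))ᶜ := by
    rw [Set.diff_eq, Set.compl_iUnion]
    congr 1
    ext x
    simp
  rw [this]
  exact (isOpen_Dset G y).inter
    (isOpen_biInter_finset fun e _ => isOpen_compl_Dset G _)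

theorem exists_pref_extend {y β : FinPath G} (hyβ : IsPref G y β) (hne : β ≠ y) :
    ∃ e : G.Ed, β.edges[y.edges.length]? = some e ∧ G.src e = y.rngF ∧
      IsPref G (catP G y (FinPath.ep e)) β := by
  have hlt : y.edges.length < β.edges.length := by
    rcases Nat.lt_or_ge y.edges.length β.edges.length with h | h
    · exact h
    · have heq := hyβ.2.eq_of_length (le_antisymm hyβ.2.length_le h)
      exact absurd (FinPath.ext' hyβ.1.symm heq.symm) hne
  have hsrc' : G.src β.edges[y.edges.length] = y.rngF := by
    have h1 := src_getElem G β.valid (List.getElem?_eq_getElem hlt)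
    rw [← List.prefix_iff_eq_take.mp hyβ.2] at h1
    rw [h1]
    show rngTo G β.start y.edges = rngTo G y.start y.edges
    rw [← hyβ.1]
  refine ⟨β.edges[y.edges.length], List.getElem?_eq_getElem hlt, hsrc', ?_, ?_⟩
  · exact (catP_ep_start G hsrc').trans hyβ.1
  · rw [catP_ep_edges G hsrc']
    obtain ⟨t, ht⟩ := hyβ.2
    have htne : t ≠ [] := by
      intro hc
      rw [hc, List.append_nil] at ht
      exact hne (FinPath.ext' hyβ.1.symm ht.symm)
    obtain ⟨a, t', rfl⟩ := List.exists_cons_of_ne_nil htne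
    have ha : a = β.edges[y.edges.length] := by
      have h2 : β.edges[y.edges.length]? = some a := by
        rw [← ht, List.getElem?_append_right le_rfl, Nat.sub_self]
        simp
      rw [List.getElem?_eq_getElem hlt] at h2
      exact (Option.some.injEq _ _).mp h2.symm
    exact ⟨t', by rw [← ha, ← ht]; simp⟩

open Classical in
theorem key_nbhd (y : FinPath G) (t : Set (PathSp G))
    (ht : t ∈ @nhds (PathSp G) (pathTop G) (Sum.inl y)) :
    ∃ F : Finset G.Ed, (∀ e ∈ F, G.src e = y.rngF) ∧
      Dset G y \ ⋃ e ∈ F, Dset G (catP G y (FinPath.ep e)) ⊆ t := by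
  letI := pathTop G
  obtain ⟨b, ⟨f, ⟨hfin, hsub⟩, rfl⟩, hyb, hbt⟩ :=
    (TopologicalSpace.isTopologicalBasis_of_subbasis
      (rfl : pathTop G = _)).mem_nhds_iff.mp ht
  classical
  set pick : Set (PathSp G) → Option G.Ed := fun W =>
    if h : ∃ e : G.Ed, G.src e = y.rngF ∧ ∃ β : FinPath G,
        W = (Dset G β)ᶜ ∧ β.edges[y.edges.length]? = some e
    then some h.choose else none with hpick
  refine ⟨(hfin.toFinset.image pick).eraseNone, ?_, ?_⟩
  · intro e he
    rw [Finset.mem_eraseNone, Finset.mem_image] at he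
    obtain ⟨W, _, hW⟩ := he
    rw [hpick] at hW
    simp only at hW
    split at hW
    · rename_i hex
      have := hex.choose_spec.1
      rw [(Option.some.injEq _ _).mp hW] at this
      exact this
    · exact nomatch hW
  · intro x hx
    apply hbt
    intro W hW
    rcases hsub hW with ⟨β, rfl⟩ | ⟨β, rfl⟩
    · exact Dset_mono G ((mem_Dset_inl G).mp (hyb _ hW)) hx.1
    · simp only
      intro hxβ
      have hyβ : ¬ IsPref G β y := fun hp => hyb _ hW (mem_Dset_inl G |>.mpr hp)
      have hpx := (ext_iff_pref G β _).mp hxβ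
      have hpy := (ext_iff_pref G y _).mp hx.1
      have hyβ' : IsPref G y β := by
        rcases le_or_gt y.edges.length β.edges.length with h | h
        · exact pref_of_le G hpy hpx h
        · exact absurd (pref_of_le G hpx hpy h.le) hyβ
      have hne : β ≠ y := fun hc => hyβ (hc ▸ ⟨rfl, List.prefix_refl _⟩)
      obtain ⟨e, he, hsrc, hpref⟩ := exists_pref_extend G hyβ' hne
      have heF : e ∈ (hfin.toFinset.image pick).eraseNone := by
        rw [Finset.mem_eraseNone, Finset.mem_image]
        refine ⟨(Dset G β)ᶜ, hfin.mem_toFinset.mpr hW, ?_⟩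
        rw [hpick]
        simp only
        have hex : ∃ e' : G.Ed, G.src e' = y.rngF ∧ ∃ β' : FinPath G,
            (Dset G β)ᶜ = (Dset G β')ᶜ ∧ β'.edges[y.edges.length]? = some e' :=
          ⟨e, hsrc, β, rfl, he⟩
        rw [dif_pos hex]
        obtain ⟨hs', β', hβ', he'⟩ := hex.choose_spec
        have : β' = β := (Dset_inj G (compl_inj_iff.mp hβ'.symm)).symm ▸ rfl
        have hββ : β = β' := Dset_inj G (compl_inj_iff.mp hβ')
        rw [← hββ] at he'
        rw [he'] at he
        exact congrArg some ((Option.some.injEq _ _).mp he)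
      exact hx.2 (Set.mem_biUnion heF (Dset_mono G hpref hxβ))

/-- (1) For every `y ∈ Y_∞`, the sets
`D_y \ (D_{ye_1} ∪ ⋯ ∪ D_{ye_n})`, where `{e_1, …, e_n}` ranges over finite sets of
edges starting at `r(y)`, form a neighborhood basis at `y` in `Y ∪ Z`;
(2) for `α ∈ Y`, the singleton `{α}` is open in `Y ∪ Z` iff `α ∈ Y_f`. -/
theorem nhds_basis_at_finite_path_and_isolated_points
    (G : Graph) [Countable G.V] [Countable G.Ed]
    (hns : ∀ v : G.V, ∃ e : G.Ed, G.src e = v) :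
    (∀ y : FinPath G, Vinf G y.rngF →
      (@nhds (PathSp G) (pathTop G) (Sum.inl y)).HasBasis
        (fun F : Finset G.Ed => ∀ e ∈ F, G.src e = y.rngF)
        (fun F => Dset G y \ ⋃ e ∈ F, Dset G (catP G y (FinPath.ep e)))) ∧
    (∀ α : FinPath G,
      @IsOpen (PathSp G) (pathTop G) {Sum.inl α} ↔ {e : G.Ed | G.src e = α.rngF}.Finite) := by
  letI := pathTop G
  have hmem_basic : ∀ (y : FinPath G) (F : Finset G.Ed), (∀ e ∈ F, G.src e = y.rngF) →
      Sum.inl y ∈ Dset G y \ ⋃ e ∈ F, Dset G (catP G y (FinPath.ep e)) := by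
    intro y F hF
    refine ⟨mem_Dset_self G y, ?_⟩
    intro hc
    obtain ⟨e, heF, hmem⟩ := Set.mem_iUnion₂.mp hc
    exact not_mem_Dset_catP G (hF e heF) hmem
  constructor
  · intro y _
    rw [Filter.hasBasis_iff]
    intro t
    constructor
    · exact key_nbhd G y t
    · rintro ⟨F, hF, hsub⟩
      exact Filter.mem_of_superset
        ((isOpen_basic_nbhd G y F).mem_nhds (hmem_basic y F hF)) hsub
  · intro α
    constructor
    · intro hopen
      by_contra hinf
      obtain ⟨F, hF, hsub⟩ := key_nbhd G α _ (hopen.mem_nhds rfl)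
      obtain ⟨e, hesrc, heF⟩ := Set.Infinite.exists_notMem_finset hinf F
      have hsrc : G.src e = α.rngF := hesrc
      set x : PathSp G := Sum.inl (catP G α (FinPath.ep e)) with hx
      have hx1 : x ∈ Dset G α := by
        rw [hx]; refine (mem_Dset_inl G).mpr ?_
        exact ⟨(catP_ep_start G hsrc).symm, by rw [catP_ep_edges G hsrc]; simp⟩
      have hx2 : x ∉ ⋃ e' ∈ F, Dset G (catP G α (FinPath.ep e')) := by
        intro hc
        obtain ⟨e', he'F, hmem⟩ := Set.mem_iUnion₂.mp hc
        have hp := (mem_Dset_inl G).mp hmem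
        have hlen : (catP G α (FinPath.ep e')).edges.length =
            (catP G α (FinPath.ep e)).edges.length := by
          rw [catP_ep_edges G (hF e' he'F), catP_ep_edges G hsrc]; simp
        have := hp.2.eq_of_length hlen
        rw [catP_ep_edges G (hF e' he'F), catP_ep_edges G hsrc] at this
        have : e' = e := by simpa using this
        exact heF (this ▸ he'F)
      have := hsub ⟨hx1, hx2⟩
      replace this : x = Sum.inl α := this
      rw [hx] at this
      have hed := congrArg (fun p : PathSp G =>
        match p with | Sum.inl β => β.edges.length | Sum.inr _ => 0) this
      simp only at hed
      rw [catP_ep_edges G hsrc] at hed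
      simp at hed
    · intro hfin
      have hset : {(Sum.inl α : PathSp G)} =
          Dset G α \ ⋃ e ∈ hfin.toFinset, Dset G (catP G α (FinPath.ep e)) := by
        apply Set.eq_of_subset_of_subset
        · rintro x rfl
          exact hmem_basic α hfin.toFinset (fun e he => hfin.mem_toFinset.mp he)
        · rintro x ⟨hx1, hx2⟩
          rcases hx1 with ⟨β, h, rfl⟩ | ⟨w, h, rfl⟩
          · rcases heq : β.edges with _ | ⟨e, rest⟩
            · have : α.concat β h = α := FinPath.ext' rfl (by
                show α.edges ++ β.edges = α.edges
                rw [heq, List.append_nil])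
              rw [this]
              rfl
            · exfalso
              have hβv := β.valid
              rw [heq] at hβv
              have hsrc : G.src e = α.rngF := by rw [hβv.1, h]
              apply hx2
              refine Set.mem_biUnion (hfin.mem_toFinset.mpr hsrc) ?_
              apply (mem_Dset_inl G).mpr
              refine ⟨?_, ?_⟩
              · rw [catP_ep_start G hsrc]; rfl
              · show (catP G α (FinPath.ep e)).edges <+: α.edges ++ β.edges
                rw [catP_ep_edges G hsrc, heq]
                rw [show α.edges ++ e :: rest = (α.edges ++ [e]) ++ rest by simp]
                exact ⟨rest, rfl⟩
          · exfalso
            set e := w.seq 0 with he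
            have hsrc : G.src e = α.rngF := h
            apply hx2
            refine Set.mem_biUnion (hfin.mem_toFinset.mpr hsrc) ?_
            refine (ext_iff_pref G _ _).mpr ⟨?_, ?_⟩
            · rw [catP_ep_start G hsrc]
              exact concatInf_start α w h
            · intro i hi
              rw [catP_ep_edges G hsrc] at hi ⊢
              show some ((α.concatInf w h).seq i) = _
              rw [concatInf_seq]
              rcases Nat.lt_or_ge i α.edges.length with hlt | hge
              · rw [List.getElem?_eq_getElem hlt,
                  List.getElem?_append_left hlt, List.getElem?_eq_getElem hlt]
                rfl
              · have hieq : i = α.edges.length := by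
                  rw [List.length_append] at hi
                  simp at hi
                  omega
                subst hieq
                rw [List.getElem?_eq_none le_rfl, List.getElem?_concat_length]
                simp
                exact he.symm
      rw [hset]
      exact isOpen_basic_nbhd G α hfin.toFinset

end GraphCstar
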